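/- arXiv:1712.03833 — 2 statements merged into one kernel-verified Lean document; each statement's English description precedes it below -/
import Mathlib

section
/- For every u ∈ C^∞(cl B⁵; ℂ), every r ∈ [0,1] and every ω ∈ S⁴: r⁴|u(rω)|² ≤ 2|u(ω)|² + ∫₀¹ s⁴ |∇u(sω)|² ds, where |∇u|² := Σ_{i=1}^{5} |∂_i u|². -/
open MeasureTheory

noncomputable section

abbrev E5 : Type := EuclideanSpace ℝ (Fin 5)

/-- the partial derivative in the `i`-th coordinate direction -/
def pd (i : Fin 5) (f : E5 → ℂ) : E5 → ℂ :=
  fun x => fderiv ℝ f x (EuclideanSpace.single i 1)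

/-- For every `u ∈ C^∞(cl B⁵; ℂ)`, every `r ∈ [0,1]` and every `ω ∈ S⁴`:
`r⁴|u(rω)|² ≤ 2|u(ω)|² + ∫₀¹ s⁴ |∇u(sω)|² ds`. -/
theorem stmt_1 (u : E5 → ℂ) (hu : ContDiff ℝ (⊤ : ℕ∞) u)
    (r : ℝ) (hr : r ∈ Set.Icc (0 : ℝ) 1)
    (ω : E5) (hω : ω ∈ Metric.sphere (0 : E5) 1) :
    r ^ 4 * ‖u (r • ω)‖ ^ 2 ≤
      2 * ‖u ω‖ ^ 2 + ∫ s in (0 : ℝ)..1, s ^ 4 * ∑ i : Fin 5, ‖pd i u (s • ω)‖ ^ 2 := by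
  obtain ⟨hr0, hr1⟩ := hr
  have hdiff : Differentiable ℝ u := hu.differentiable (by simp)
  -- norm of ω
  have hωnorm : ∑ i : Fin 5, (ω i) ^ 2 = 1 := by
    have h := mem_sphere_zero_iff_norm.mp hω
    rw [EuclideanSpace.norm_eq] at h
    simp only [Real.norm_eq_abs, sq_abs] at h
    have h2 := congrArg (· ^ 2) h
    simp only [Real.sq_sqrt (Finset.sum_nonneg fun i _ => sq_nonneg (ω i))] at h2
    simpa using h2
  have hdecomp : ω = ∑ i : Fin 5, ω i • EuclideanSpace.single i (1 : ℝ) := by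
    have h := (EuclideanSpace.basisFun (Fin 5) ℝ).toBasis.sum_repr ω
    simpa [EuclideanSpace.basisFun_apply, EuclideanSpace.basisFun_repr] using h.symm
  have hLbound : ∀ x : E5, ‖fderiv ℝ u x ω‖ ^ 2 ≤ ∑ i : Fin 5, ‖pd i u x‖ ^ 2 := by
    intro x
    have h1 : fderiv ℝ u x ω = ∑ i : Fin 5, ω i • pd i u x := by
      conv_lhs => rw [hdecomp]
      rw [map_sum]
      simp [pd]
    calc ‖fderiv ℝ u x ω‖ ^ 2 ≤ (∑ i : Fin 5, |ω i| * ‖pd i u x‖) ^ 2 := by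
          rw [h1]
          have hn : ‖∑ i : Fin 5, ω i • pd i u x‖ ≤ ∑ i : Fin 5, |ω i| * ‖pd i u x‖ := by
            refine (norm_sum_le _ _).trans_eq ?_
            simp [norm_smul]
          exact pow_le_pow_left₀ (norm_nonneg _) hn 2
      _ ≤ (∑ i : Fin 5, (ω i) ^ 2) * ∑ i : Fin 5, ‖pd i u x‖ ^ 2 := by
          have := Finset.sum_mul_sq_le_sq_mul_sq Finset.univ (fun i => |ω i|)
            (fun i => ‖pd i u x‖)
          simpa [sq_abs] using this
      _ = ∑ i : Fin 5, ‖pd i u x‖ ^ 2 := by rw [hωnorm, one_mul]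
  -- the curve
  have hsmul : Continuous (fun s : ℝ => s • ω) := continuous_id.smul continuous_const
  have hF : ∀ s : ℝ, HasDerivAt (fun t : ℝ => u (t • ω)) (fderiv ℝ u (s • ω) ω) s := by
    intro s
    have h1 : HasDerivAt (fun t : ℝ => t • ω) ω s := by
      simpa using (hasDerivAt_id s).smul_const ω
    exact (hdiff (s • ω)).hasFDerivAt.comp_hasDerivAt s h1
  have hg : ∀ s : ℝ, HasDerivAt (fun t : ℝ => t ^ 4 * ‖u (t • ω)‖ ^ 2)
      (4 * s ^ 3 * ‖u (s • ω)‖ ^ 2 +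
        s ^ 4 * (2 * (inner ℝ (u (s • ω)) (fderiv ℝ u (s • ω) ω) : ℝ))) s := by
    intro s
    have h1 := (hF s).norm_sq
    have h2 : HasDerivAt (fun t : ℝ => t ^ 4) (4 * s ^ 3) s := by
      simpa using hasDerivAt_pow 4 s
    simpa using h2.fun_mul h1
  -- continuity facts
  have hfd : Continuous (fun x : E5 => fderiv ℝ u x) := hu.continuous_fderiv (by simp)
  have hFc : Continuous (fun s : ℝ => u (s • ω)) := hu.continuous.comp hsmul
  have hLc : Continuous (fun s : ℝ => fderiv ℝ u (s • ω) ω) :=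
    (hfd.comp hsmul).clm_apply continuous_const
  have hΦc : Continuous (fun s : ℝ => ∑ i : Fin 5, ‖pd i u (s • ω)‖ ^ 2) := by
    refine continuous_finset_sum _ fun i _ => ?_
    exact (((hfd.comp hsmul).clm_apply continuous_const).norm.pow 2)
  have hg'c : Continuous (fun s : ℝ => 4 * s ^ 3 * ‖u (s • ω)‖ ^ 2 +
      s ^ 4 * (2 * (inner ℝ (u (s • ω)) (fderiv ℝ u (s • ω) ω) : ℝ))) := by
    have h3 : Continuous fun s : ℝ => (inner ℝ (u (s • ω)) (fderiv ℝ u (s • ω) ω) : ℝ) :=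
      hFc.inner hLc
    fun_prop
  have hΦint : ∀ a b : ℝ, IntervalIntegrable
      (fun s : ℝ => s ^ 4 * ∑ i : Fin 5, ‖pd i u (s • ω)‖ ^ 2) volume a b :=
    fun a b => ((continuous_pow 4).mul hΦc).intervalIntegrable a b
  -- FTC
  have key : ∫ s in r..1, (4 * s ^ 3 * ‖u (s • ω)‖ ^ 2 +
      s ^ 4 * (2 * (inner ℝ (u (s • ω)) (fderiv ℝ u (s • ω) ω) : ℝ)))
      = (1:ℝ) ^ 4 * ‖u ((1:ℝ) • ω)‖ ^ 2 - r ^ 4 * ‖u (r • ω)‖ ^ 2 :=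
    intervalIntegral.integral_eq_sub_of_hasDerivAt (fun s _ => hg s)
      (hg'c.intervalIntegrable r 1)
  -- pointwise lower bound on the derivative
  have hpt : ∀ s ∈ Set.Icc r 1, -(s ^ 4 * ∑ i : Fin 5, ‖pd i u (s • ω)‖ ^ 2) ≤
      4 * s ^ 3 * ‖u (s • ω)‖ ^ 2 +
        s ^ 4 * (2 * (inner ℝ (u (s • ω)) (fderiv ℝ u (s • ω) ω) : ℝ)) := by
    intro s hs
    have hs0 : 0 ≤ s := le_trans hr0 hs.1
    have hs1 : s ≤ 1 := hs.2
    set a := ‖u (s • ω)‖ with ha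
    set b := ‖fderiv ℝ u (s • ω) ω‖ with hb
    have hL2 : b ^ 2 ≤ ∑ i : Fin 5, ‖pd i u (s • ω)‖ ^ 2 := hLbound (s • ω)
    have hinner : -(a * b) ≤ (inner ℝ (u (s • ω)) (fderiv ℝ u (s • ω) ω) : ℝ) := by
      have h1 := abs_real_inner_le_norm (u (s • ω)) (fderiv ℝ u (s • ω) ω)
      have h2 := neg_abs_le (inner ℝ (u (s • ω)) (fderiv ℝ u (s • ω) ω) : ℝ)
      linarith
    have ha0 : 0 ≤ a := norm_nonneg _
    have hb0 : 0 ≤ b := norm_nonneg _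
    have h43 : s ^ 4 ≤ s ^ 3 := pow_le_pow_of_le_one hs0 hs1 (by norm_num)
    have hs4 : (0:ℝ) ≤ s ^ 4 := pow_nonneg hs0 4
    nlinarith [mul_nonneg hs4 (sq_nonneg (a - b)), mul_nonneg (sub_nonneg.mpr h43) (sq_nonneg a),
      mul_le_mul_of_nonneg_left hL2 hs4, mul_le_mul_of_nonneg_left hinner hs4]
  have hmono : ∫ s in r..1, -(s ^ 4 * ∑ i : Fin 5, ‖pd i u (s • ω)‖ ^ 2) ≤
      ∫ s in r..1, (4 * s ^ 3 * ‖u (s • ω)‖ ^ 2 +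
        s ^ 4 * (2 * (inner ℝ (u (s • ω)) (fderiv ℝ u (s • ω) ω) : ℝ))) :=
    intervalIntegral.integral_mono_on hr1 ((hΦint r 1).neg) (hg'c.intervalIntegrable r 1) hpt
  rw [intervalIntegral.integral_neg] at hmono
  have hsplit : (∫ s in (0:ℝ)..r, s ^ 4 * ∑ i : Fin 5, ‖pd i u (s • ω)‖ ^ 2) +
      ∫ s in r..1, s ^ 4 * ∑ i : Fin 5, ‖pd i u (s • ω)‖ ^ 2 =
      ∫ s in (0:ℝ)..1, s ^ 4 * ∑ i : Fin 5, ‖pd i u (s • ω)‖ ^ 2 :=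
    intervalIntegral.integral_add_adjacent_intervals (hΦint 0 r) (hΦint r 1)
  have hpos : 0 ≤ ∫ s in (0:ℝ)..r, s ^ 4 * ∑ i : Fin 5, ‖pd i u (s • ω)‖ ^ 2 := by
    refine intervalIntegral.integral_nonneg hr0 fun s hs => ?_
    have : (0:ℝ) ≤ ∑ i : Fin 5, ‖pd i u (s • ω)‖ ^ 2 :=
      Finset.sum_nonneg fun i _ => sq_nonneg _
    positivity
  have h1 : (1:ℝ) ^ 4 * ‖u ((1:ℝ) • ω)‖ ^ 2 = ‖u ω‖ ^ 2 := by simp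
  have hnn : (0:ℝ) ≤ ‖u ω‖ ^ 2 := sq_nonneg _
  linarith [key, hmono, hsplit, hpos]

end
end

section
/- For every u = (u₁,u₂) with u₁ ∈ C⁴(cl B⁵;ℂ), u₂ ∈ C³(cl B⁵;ℂ) and every ω ∈ S⁴: ζ(ω, (L̃u)(ω)) = −ζ(ω, u(ω)) + Δ^{S⁴}_ω f(ω), where f(ξ) := u₁(ξ) + ξ^j ∂_j u₁(ξ) and Δ^{S⁴}_ω f := (δ^{jk} − ω^jω^k) ∂_j∂_k f(ω) − 4 ω^j ∂_j f(ω). -/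
open MeasureTheory ComplexConjugate

noncomputable section

/-- the iterated partial derivative `∂^β` for a multi-index `β` -/
def pdM (β : Fin 5 → ℕ) (f : E5 → ℂ) : E5 → ℂ :=
  (List.finRange 5).foldr (fun i g => (pd i)^[β i] g) f

/-- the Laplacian `Δf = ∑_j ∂_j∂_j f` -/
def lap (f : E5 → ℂ) : E5 → ℂ := fun x => ∑ j : Fin 5, pd j (pd j f) x

/-- the open unit ball `B⁵ ⊆ ℝ⁵` -/
def ball5 : Set E5 := Metric.ball 0 1

/-- the unit sphere `S⁴ = ∂B⁵` -/
def sph4 : Set E5 := Metric.sphere 0 1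

/-- the squared `L²` norm over the unit ball -/
def bL2Sq (f : E5 → ℂ) : ℝ := ∫ x in ball5, ‖f x‖ ^ 2

/-- the squared `H^m(B⁵)` norm: `∑_{|β| ≤ m} ‖∂^β f‖²_{L²(B⁵)}` -/
def HSq (m : ℕ) (f : E5 → ℂ) : ℝ :=
  ∑ β : Fin 5 → Fin (m + 1),
    if (∑ i, (β i : ℕ)) ≤ m then bL2Sq (pdM (fun i => (β i : ℕ)) f) else 0

/-- the sesquilinear form `(u|v)₁` -/
def ip1 (u v : (E5 → ℂ) × (E5 → ℂ)) : ℂ :=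
  (∑ i : Fin 5, ∑ j : Fin 5, ∑ k : Fin 5,
      ∫ x in ball5, pd i (pd j (pd k u.1)) x * conj (pd i (pd j (pd k v.1)) x)) +
    (∑ i : Fin 5, ∑ j : Fin 5,
      ∫ x in ball5, pd i (pd j u.2) x * conj (pd i (pd j v.2) x)) +
    (∑ i : Fin 5, ∑ j : Fin 5,
      ∫ ω in sph4, pd i (pd j u.1) ω * conj (pd i (pd j v.1) ω) ∂μH[4])

/-- the sesquilinear form `(u|v)₂` -/
def ip2 (u v : (E5 → ℂ) × (E5 → ℂ)) : ℂ :=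
  (∑ i : Fin 5, ∫ x in ball5, pd i (lap u.1) x * conj (pd i (lap v.1) x)) +
    (∑ i : Fin 5, ∑ j : Fin 5,
      ∫ x in ball5, pd i (pd j u.2) x * conj (pd i (pd j v.2) x)) +
    (∑ j : Fin 5, ∫ ω in sph4, pd j u.2 ω * conj (pd j v.2 ω) ∂μH[4])

/-- the sesquilinear form `(u|v)₃` -/
def ip3 (u v : (E5 → ℂ) × (E5 → ℂ)) : ℂ :=
  5 * ip1 u v + ip2 u v + ∫ ω in sph4, u.2 ω * conj (v.2 ω) ∂μH[4]

/-- the sesquilinear form `(u|v)₄` -/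
def ip4 (u v : (E5 → ℂ) × (E5 → ℂ)) : ℂ :=
  ip1 u v + ip2 u v + ∑ i : Fin 5, ∫ ω in sph4, pd i u.1 ω * conj (pd i v.1 ω) ∂μH[4]

/-- `ζ(ω, w(ω)) = ω^iω^j ∂_i∂_j w₁(ω) + 5ω^i ∂_i w₁(ω) + 3w₁(ω) + ω^j ∂_j w₂(ω) + 3w₂(ω)` -/
def zeta (w : (E5 → ℂ) × (E5 → ℂ)) (ω : E5) : ℂ :=
  (∑ i : Fin 5, ∑ j : Fin 5, (ω i : ℂ) * (ω j : ℂ) * pd i (pd j w.1) ω) +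
    5 * (∑ i : Fin 5, (ω i : ℂ) * pd i w.1 ω) + 3 * w.1 ω +
    (∑ j : Fin 5, (ω j : ℂ) * pd j w.2 ω) + 3 * w.2 ω

/-- the sesquilinear form `(u|v)₅` -/
def ip5 (u v : (E5 → ℂ) × (E5 → ℂ)) : ℂ :=
  (∫ ω in sph4, zeta u ω ∂μH[4]) * conj (∫ ω in sph4, zeta v ω ∂μH[4])

/-- the full sesquilinear form `(u|v) = ∑_{i=1}^{5} (u|v)_i` -/
def ipT (u v : (E5 → ℂ) × (E5 → ℂ)) : ℂ :=
  ip1 u v + ip2 u v + ip3 u v + ip4 u v + ip5 u v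

/-- the free operator `L̃u = (−ξ^j ∂_j u₁ − u₁ + u₂, Δu₁ − ξ^j ∂_j u₂ − 2u₂)` -/
def Ltil (u : (E5 → ℂ) × (E5 → ℂ)) : (E5 → ℂ) × (E5 → ℂ) :=
  (fun ξ => -(∑ j : Fin 5, (ξ j : ℂ) * pd j u.1 ξ) - u.1 ξ + u.2 ξ,
   fun ξ => lap u.1 ξ - (∑ j : Fin 5, (ξ j : ℂ) * pd j u.2 ξ) - 2 * u.2 ξ)


section Helpers
lemma contDiff_pd {f : E5 → ℂ} {n m : WithTop ℕ∞} (hf : ContDiff ℝ n f) (h : m + 1 ≤ n) (i : Fin 5) :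
    ContDiff ℝ m (pd i f) :=
  (hf.fderiv_right h).clm_apply contDiff_const

lemma pd_add {f g : E5 → ℂ} (hf : Differentiable ℝ f) (hg : Differentiable ℝ g) (i : Fin 5) (x : E5) :
    pd i (fun y => f y + g y) x = pd i f x + pd i g x := by
  simp [pd, fderiv_fun_add (hf x) (hg x)]

lemma pd_sum {g : Fin 5 → E5 → ℂ} (hg : ∀ m, Differentiable ℝ (g m)) (i : Fin 5) (x : E5) :
    pd i (fun y => ∑ m, g m y) x = ∑ m, pd i (g m) x := by
  simp [pd, fderiv_fun_sum (fun m _ => (hg m x))]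

lemma diff_coord (j : Fin 5) : Differentiable ℝ (fun ξ : E5 => ((ξ j : ℝ) : ℂ)) :=
  (Complex.ofRealCLM.comp (EuclideanSpace.proj j) : E5 →L[ℝ] ℂ).differentiable

lemma pd_coord (i j : Fin 5) (x : E5) :
    pd i (fun ξ : E5 => ((ξ j : ℝ) : ℂ)) x = if j = i then 1 else 0 := by
  have h : (fun ξ : E5 => ((ξ j : ℝ) : ℂ)) = (Complex.ofRealCLM.comp (EuclideanSpace.proj j) : E5 →L[ℝ] ℂ) := rfl
  rw [pd, h, ContinuousLinearMap.fderiv]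
  simp [EuclideanSpace.single_apply]
  split <;> simp

lemma pd_mul {f g : E5 → ℂ} (hf : Differentiable ℝ f) (hg : Differentiable ℝ g) (i : Fin 5) (x : E5) :
    pd i (fun y => f y * g y) x = pd i f x * g x + f x * pd i g x := by
  simp [pd, fderiv_fun_mul (hf x) (hg x)]; ring

lemma pd_comm {f : E5 → ℂ} (hf : ContDiff ℝ 2 f) (i j : Fin 5) (x : E5) :
    pd i (pd j f) x = pd j (pd i f) x := by
  have hdf : DifferentiableAt ℝ (fderiv ℝ f) x :=
    ((hf.fderiv_right (m := 1) (by norm_num)).differentiable (by norm_num)).differentiableAt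
  have key : ∀ k l : Fin 5, pd k (pd l f) x =
      fderiv ℝ (fderiv ℝ f) x (EuclideanSpace.single k 1) (EuclideanSpace.single l 1) := by
    intro k l
    unfold pd
    rw [fderiv_clm_apply hdf (differentiableAt_const _)]
    simp
  rw [key, key]
  exact (hf.contDiffAt.isSymmSndFDerivAt (by norm_num)).eq _ _

lemma diff_weighted {g : Fin 5 → E5 → ℂ} (hg : ∀ m, Differentiable ℝ (g m)) :
    Differentiable ℝ (fun ξ : E5 => ∑ m, ((ξ m : ℝ) : ℂ) * g m ξ) := by
  apply Differentiable.fun_sum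
  intro m _
  exact (diff_coord m).mul (hg m)

lemma pd_weighted {g : Fin 5 → E5 → ℂ} (hg : ∀ m, Differentiable ℝ (g m)) (i : Fin 5) (x : E5) :
    pd i (fun ξ : E5 => ∑ m, ((ξ m : ℝ) : ℂ) * g m ξ) x
      = g i x + ∑ m, ((x m : ℝ) : ℂ) * pd i (g m) x := by
  rw [pd_sum (fun m => (diff_coord m).fun_mul (hg m))]
  have h : ∀ m : Fin 5, pd i (fun y => ((y m : ℝ) : ℂ) * g m y) x
      = (if m = i then 1 else 0) * g m x + ((x m : ℝ) : ℂ) * pd i (g m) x := by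
    intro m
    rw [pd_mul (diff_coord m) (hg m), pd_coord]
  simp only [h, Finset.sum_add_distrib, ite_mul, one_mul, zero_mul]
  rw [Finset.sum_ite_eq' Finset.univ i (fun m => g m x)]
  simp

lemma pd_comb {f g h : E5 → ℂ} (hf : Differentiable ℝ f) (hg : Differentiable ℝ g)
    (hh : Differentiable ℝ h) (i : Fin 5) (x : E5) :
    pd i (fun y => -f y - g y + h y) x = -pd i f x - pd i g x + pd i h x := by
  simp [pd, fderiv_fun_add (((hf.fun_neg).fun_sub hg) x) (hh x), fderiv_fun_sub ((hf.fun_neg) x) (hg x), fderiv_fun_neg]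

lemma pd_comb2 {f g h : E5 → ℂ} (hf : Differentiable ℝ f) (hg : Differentiable ℝ g)
    (hh : Differentiable ℝ h) (i : Fin 5) (x : E5) :
    pd i (fun y => f y - g y - 2 * h y) x = pd i f x - pd i g x - 2 * pd i h x := by
  have h2 : Differentiable ℝ (fun y => (2:ℂ) * h y) := hh.const_mul 2
  simp [pd, fderiv_fun_sub ((hf.fun_sub hg) x) (h2 x), fderiv_fun_sub (hf x) (hg x),
    fderiv_const_mul (hh x) (2:ℂ)]

end Helpers

set_option maxHeartbeats 2000000 in
/-- identity (5.1) / eq. (identityzeta5): for `u₁ ∈ C⁴(cl B⁵;ℂ)`, `u₂ ∈ C³(cl B⁵;ℂ)` and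
`ω ∈ S⁴`: `ζ(ω, (L̃u)(ω)) = −ζ(ω, u(ω)) + Δ^{S⁴}_ω (u₁ + ξ^j ∂_j u₁)(ω)`, where
`Δ^{S⁴}_ω f = (δ^{jk} − ω^jω^k) ∂_j∂_k f(ω) − 4 ω^j ∂_j f(ω)`. -/
theorem stmt_6 (u : (E5 → ℂ) × (E5 → ℂ))
    (hu1 : ContDiff ℝ 4 u.1) (hu2 : ContDiff ℝ 3 u.2)
    (ω : E5) (hω : ω ∈ Metric.sphere (0 : E5) 1) :
    zeta (Ltil u) ω =
      -zeta u ω +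
        ((∑ j : Fin 5, ∑ k : Fin 5,
            ((if j = k then (1 : ℂ) else 0) - (ω j : ℂ) * (ω k : ℂ)) *
              pd j (pd k (fun ξ => u.1 ξ + ∑ m : Fin 5, (ξ m : ℂ) * pd m u.1 ξ)) ω) -
          4 * ∑ j : Fin 5,
            (ω j : ℂ) * pd j (fun ξ => u.1 ξ + ∑ m : Fin 5, (ξ m : ℂ) * pd m u.1 ξ) ω) := by

  have d1 : Differentiable ℝ u.1 := hu1.differentiable (by norm_num)
  have d2 : Differentiable ℝ u.2 := hu2.differentiable (by norm_num)
  have c3 : ∀ k, ContDiff ℝ 3 (pd k u.1) := fun k => contDiff_pd hu1 (by norm_num) k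
  have c2 : ∀ j k, ContDiff ℝ 2 (pd j (pd k u.1)) := fun j k => contDiff_pd (c3 k) (by norm_num) j
  have d1a : ∀ k, Differentiable ℝ (pd k u.1) := fun k => (c3 k).differentiable (by norm_num)
  have d1b : ∀ j k, Differentiable ℝ (pd j (pd k u.1)) := fun j k => (c2 j k).differentiable (by norm_num)
  have e2 : ∀ k, ContDiff ℝ 2 (pd k u.2) := fun k => contDiff_pd hu2 (by norm_num) k
  have d2a : ∀ k, Differentiable ℝ (pd k u.2) := fun k => (e2 k).differentiable (by norm_num)
  have comm2 : ∀ (i j : Fin 5) x, pd i (pd j u.1) x = pd j (pd i u.1) x :=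
    fun i j x => pd_comm (hu1.of_le (by norm_num)) i j x
  have comm3 : ∀ (j k : Fin 5) x, pd j (pd k (pd k u.1)) x = pd k (pd k (pd j u.1)) x := by
    intro j k x
    rw [pd_comm ((c3 k).of_le (by norm_num)) j k x]
    have e : pd j (pd k u.1) = pd k (pd j u.1) := funext fun y => comm2 j k y
    rw [e]
  have dS1 : Differentiable ℝ (fun ξ : E5 => ∑ m : Fin 5, ((ξ m : ℝ) : ℂ) * pd m u.1 ξ) :=
    diff_weighted d1a
  have hS1 : ∀ (i : Fin 5) x, pd i (fun ξ : E5 => ∑ m : Fin 5, ((ξ m : ℝ) : ℂ) * pd m u.1 ξ) x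
      = pd i u.1 x + ∑ m, ((x m : ℝ) : ℂ) * pd i (pd m u.1) x := fun i x => pd_weighted d1a i x
  have hS1f : ∀ i : Fin 5, pd i (fun ξ : E5 => ∑ m : Fin 5, ((ξ m : ℝ) : ℂ) * pd m u.1 ξ)
      = fun x => pd i u.1 x + ∑ m, ((x m : ℝ) : ℂ) * pd i (pd m u.1) x := fun i => funext (hS1 i)
  have dpS1 : ∀ i : Fin 5, Differentiable ℝ (pd i (fun ξ : E5 => ∑ m : Fin 5, ((ξ m : ℝ) : ℂ) * pd m u.1 ξ)) := by
    intro i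
    rw [hS1f i]
    exact (d1a i).add (diff_weighted (fun m => d1b i m))
  have hS1'' : ∀ (i j : Fin 5) x, pd i (pd j (fun ξ : E5 => ∑ m : Fin 5, ((ξ m : ℝ) : ℂ) * pd m u.1 ξ)) x
      = 2 * pd i (pd j u.1) x + ∑ m, ((x m : ℝ) : ℂ) * pd i (pd j (pd m u.1)) x := by
    intro i j x
    rw [hS1f j, pd_add (d1a j) (diff_weighted (fun m => d1b j m)) i x,
      pd_weighted (fun m => d1b j m) i x, comm2 j i x]
    ring
  have hA1 : ∀ i : Fin 5, pd i (fun ξ : E5 => -(∑ j : Fin 5, ((ξ j : ℝ) : ℂ) * pd j u.1 ξ) - u.1 ξ + u.2 ξ)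
      = fun x => -pd i (fun ξ : E5 => ∑ m : Fin 5, ((ξ m : ℝ) : ℂ) * pd m u.1 ξ) x - pd i u.1 x + pd i u.2 x :=
    fun i => funext fun x => pd_comb dS1 d1 d2 i x
  have hA1' : ∀ (i : Fin 5) x, pd i (fun ξ : E5 => -(∑ j : Fin 5, ((ξ j : ℝ) : ℂ) * pd j u.1 ξ) - u.1 ξ + u.2 ξ) x
      = -(2 * pd i u.1 x + ∑ m, ((x m : ℝ) : ℂ) * pd i (pd m u.1) x) + pd i u.2 x := by
    intro i x
    rw [congrFun (hA1 i) x, hS1 i x]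
    ring
  have hA2' : ∀ (i j : Fin 5) x, pd i (pd j (fun ξ : E5 => -(∑ j : Fin 5, ((ξ j : ℝ) : ℂ) * pd j u.1 ξ) - u.1 ξ + u.2 ξ)) x
      = -(3 * pd i (pd j u.1) x + ∑ m, ((x m : ℝ) : ℂ) * pd i (pd j (pd m u.1)) x) + pd i (pd j u.2) x := by
    intro i j x
    rw [hA1 j, pd_comb (dpS1 j) (d1a j) (d2a j) i x, hS1'' i j x]
    ring
  have hB1' : ∀ (j : Fin 5) x, pd j (fun ξ : E5 => (∑ k : Fin 5, pd k (pd k u.1) ξ) - (∑ k : Fin 5, ((ξ k : ℝ) : ℂ) * pd k u.2 ξ) - 2 * u.2 ξ) x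
      = (∑ k, pd k (pd k (pd j u.1)) x) - (3 * pd j u.2 x + ∑ m, ((x m : ℝ) : ℂ) * pd j (pd m u.2) x) := by
    intro j x
    rw [pd_comb2 (by exact Differentiable.fun_sum fun k _ => d1b k k) (diff_weighted d2a) d2 j x,
      pd_sum (fun k => d1b k k) j x, pd_weighted d2a j x,
      show (∑ k, pd j (pd k (pd k u.1)) x) = ∑ k, pd k (pd k (pd j u.1)) x from
        Finset.sum_congr rfl fun k _ => comm3 j k x]
    ring
  have hF1' : ∀ (k : Fin 5) x, pd k (fun ξ : E5 => u.1 ξ + ∑ m : Fin 5, ((ξ m : ℝ) : ℂ) * pd m u.1 ξ) x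
      = 2 * pd k u.1 x + ∑ m, ((x m : ℝ) : ℂ) * pd k (pd m u.1) x := by
    intro k x
    rw [pd_add d1 dS1 k x, hS1 k x]
    ring
  have hF1 : ∀ k : Fin 5, pd k (fun ξ : E5 => u.1 ξ + ∑ m : Fin 5, ((ξ m : ℝ) : ℂ) * pd m u.1 ξ)
      = fun x => pd k u.1 x + pd k (fun ξ : E5 => ∑ m : Fin 5, ((ξ m : ℝ) : ℂ) * pd m u.1 ξ) x :=
    fun k => funext fun x => pd_add d1 dS1 k x
  have hF2' : ∀ (j k : Fin 5) x, pd j (pd k (fun ξ : E5 => u.1 ξ + ∑ m : Fin 5, ((ξ m : ℝ) : ℂ) * pd m u.1 ξ)) x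
      = 3 * pd j (pd k u.1) x + ∑ m, ((x m : ℝ) : ℂ) * pd j (pd k (pd m u.1)) x := by
    intro j k x
    rw [hF1 k, pd_add (d1a k) (dpS1 k) j x, hS1'' j k x]
    ring
  simp only [zeta, Ltil, lap]
  simp only [hA2', hA1', hB1', hF2', hF1']
  have hdelta : ∀ P : Fin 5 → Fin 5 → ℂ,
      (∑ j : Fin 5, ∑ k : Fin 5, ((if j = k then (1 : ℂ) else 0) - (ω j : ℂ) * (ω k : ℂ)) * P j k)
        = (∑ j, P j j) - ∑ j : Fin 5, ∑ k : Fin 5, (ω j : ℂ) * (ω k : ℂ) * P j k := by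
    intro P
    rw [← Finset.sum_sub_distrib]
    refine Finset.sum_congr rfl fun j _ => ?_
    simp only [sub_mul, ite_mul, one_mul, zero_mul]
    rw [Finset.sum_sub_distrib, Finset.sum_ite_eq]
    simp
  rw [hdelta]
  have hM : (∑ x : Fin 5, ∑ y : Fin 5, ((ω y : ℝ) : ℂ) * pd x (pd x (pd y u.1)) ω)
      = ∑ y : Fin 5, ∑ x : Fin 5, ((ω y : ℝ) : ℂ) * pd x (pd x (pd y u.1)) ω := Finset.sum_comm
  simp only [mul_add, mul_sub, mul_neg, neg_add, Finset.sum_add_distrib, Finset.sum_sub_distrib,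
    Finset.mul_sum]
  ring_nf
  simp only [Finset.sum_neg_distrib]
  have sc1 : ∀ (c : ℂ) (f : Fin 5 → ℂ), (∑ x : Fin 5, c * f x) = c * ∑ x : Fin 5, f x :=
    fun c f => (Finset.mul_sum _ _ _).symm
  have sc2 : ∀ (c : ℂ) (f : Fin 5 → Fin 5 → ℂ),
      (∑ x : Fin 5, ∑ y : Fin 5, c * f x y) = c * ∑ x : Fin 5, ∑ y : Fin 5, f x y := by
    intro c f
    rw [Finset.mul_sum]
    exact Finset.sum_congr rfl fun x _ => (Finset.mul_sum _ _ _).symm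
  have g1 : (∑ x : Fin 5, ∑ x_1 : Fin 5, ((ω x : ℝ) : ℂ) * ((ω x_1 : ℝ) : ℂ) * 3 * pd x (pd x_1 u.1) ω)
      = 3 * ∑ x : Fin 5, ∑ x_1 : Fin 5, ((ω x : ℝ) : ℂ) * ((ω x_1 : ℝ) : ℂ) * pd x (pd x_1 u.1) ω := by
    rw [← sc2]; exact Finset.sum_congr rfl fun x _ => Finset.sum_congr rfl fun y _ => by ring
  have g2 : (∑ x : Fin 5, ∑ x_1 : Fin 5, 5 * (((ω x : ℝ) : ℂ) * ((ω x_1 : ℝ) : ℂ)) * pd x (pd x_1 u.1) ω)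
      = 5 * ∑ x : Fin 5, ∑ x_1 : Fin 5, ((ω x : ℝ) : ℂ) * ((ω x_1 : ℝ) : ℂ) * pd x (pd x_1 u.1) ω := by
    rw [← sc2]; exact Finset.sum_congr rfl fun x _ => Finset.sum_congr rfl fun y _ => by ring
  have g2' : (∑ x : Fin 5, ∑ x_1 : Fin 5, 5 * ((ω x : ℝ) : ℂ) * ((ω x_1 : ℝ) : ℂ) * pd x (pd x_1 u.1) ω)
      = 5 * ∑ x : Fin 5, ∑ x_1 : Fin 5, ((ω x : ℝ) : ℂ) * ((ω x_1 : ℝ) : ℂ) * pd x (pd x_1 u.1) ω := by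
    rw [← sc2]; exact Finset.sum_congr rfl fun x _ => Finset.sum_congr rfl fun y _ => by ring
  have g3 : (∑ x : Fin 5, 5 * ((ω x : ℝ) : ℂ) * 2 * pd x u.1 ω)
      = 10 * ∑ x : Fin 5, ((ω x : ℝ) : ℂ) * pd x u.1 ω := by
    rw [← sc1]; exact Finset.sum_congr rfl fun x _ => by ring
  have g4 : (∑ x : Fin 5, 5 * (((ω x : ℝ) : ℂ) * pd x u.2 ω))
      = 5 * ∑ x : Fin 5, ((ω x : ℝ) : ℂ) * pd x u.2 ω := sc1 5 _
  have g5 : (∑ x : Fin 5, 3 * ((ω x : ℝ) : ℂ) * pd x u.1 ω)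
      = 3 * ∑ x : Fin 5, ((ω x : ℝ) : ℂ) * pd x u.1 ω := by
    rw [← sc1]; exact Finset.sum_congr rfl fun x _ => by ring
  have g6 : (∑ x : Fin 5, ((ω x : ℝ) : ℂ) * 3 * pd x u.2 ω)
      = 3 * ∑ x : Fin 5, ((ω x : ℝ) : ℂ) * pd x u.2 ω := by
    rw [← sc1]; exact Finset.sum_congr rfl fun x _ => by ring
  have g7 : (∑ x : Fin 5, 3 * pd x (pd x u.1) ω)
      = 3 * ∑ x : Fin 5, pd x (pd x u.1) ω := sc1 3 _
  have g8 : (∑ x : Fin 5, 3 * ((ω x : ℝ) : ℂ) * pd x u.2 ω)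
      = 3 * ∑ x : Fin 5, ((ω x : ℝ) : ℂ) * pd x u.2 ω := by
    rw [← sc1]; exact Finset.sum_congr rfl fun x _ => by ring
  have g9 : (∑ x : Fin 5, 5 * (((ω x : ℝ) : ℂ) * pd x u.1 ω))
      = 5 * ∑ x : Fin 5, ((ω x : ℝ) : ℂ) * pd x u.1 ω := sc1 5 _
  have g10 : (∑ x : Fin 5, ∑ m : Fin 5, ((ω m : ℝ) : ℂ) * pd x (pd x (pd m u.1)) ω)
      = ∑ x : Fin 5, ∑ i : Fin 5, ((ω x : ℝ) : ℂ) * pd i (pd i (pd x u.1)) ω := Finset.sum_comm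
  have g11 : (∑ x : Fin 5, 4 * ((ω x : ℝ) : ℂ) * 2 * pd x u.1 ω)
      = 8 * ∑ x : Fin 5, ((ω x : ℝ) : ℂ) * pd x u.1 ω := by
    rw [← sc1]; exact Finset.sum_congr rfl fun x _ => by ring
  have g12 : (∑ x : Fin 5, ∑ x_1 : Fin 5, 4 * (((ω x : ℝ) : ℂ) * ((ω x_1 : ℝ) : ℂ)) * pd x (pd x_1 u.1) ω)
      = 4 * ∑ x : Fin 5, ∑ x_1 : Fin 5, ((ω x : ℝ) : ℂ) * ((ω x_1 : ℝ) : ℂ) * pd x (pd x_1 u.1) ω := by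
    rw [← sc2]; exact Finset.sum_congr rfl fun x _ => Finset.sum_congr rfl fun y _ => by ring
  have g12' : (∑ x : Fin 5, ∑ x_1 : Fin 5, 4 * ((ω x : ℝ) : ℂ) * ((ω x_1 : ℝ) : ℂ) * pd x (pd x_1 u.1) ω)
      = 4 * ∑ x : Fin 5, ∑ x_1 : Fin 5, ((ω x : ℝ) : ℂ) * ((ω x_1 : ℝ) : ℂ) * pd x (pd x_1 u.1) ω := by
    rw [← sc2]; exact Finset.sum_congr rfl fun x _ => Finset.sum_congr rfl fun y _ => by ring
  simp only [← Finset.sum_mul]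
  rw [g10]
  ring


end
end
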